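/- Let H be a 3-uniform hypergraph with no linear cycle and let abc ∈ E(H) be a thick hyperedge. If two distinct vertices p, q are strongly associated to abc, then no other vertex is associated to abc (i.e., for every vertex r ∉ {a,b,c,p,q}, none of rab, rbc, rca is a hyperedge of H). -/
import Mathlib


/-- A linear cycle of length `k ≥ 3` in a 3-uniform hypergraph with edge set `E`:
an alternating cyclic sequence of distinct vertices `v i` and distinct hyperedges `h i`
with `h i ∩ h (i+1) = {v (i+1)}` and non-consecutive hyperedges disjoint. -/
def IsLinearCycle {V : Type*} [DecidableEq V] (E : Finset (Finset V)) (k : ℕ)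
    (v : ZMod k → V) (h : ZMod k → Finset V) : Prop :=
  3 ≤ k ∧ Function.Injective v ∧ Function.Injective h ∧
    (∀ i, h i ∈ E) ∧ (∀ i, h i ∩ h (i + 1) = {v (i + 1)}) ∧
    (∀ i j, i ≠ j → i + 1 ≠ j → j + 1 ≠ i → h i ∩ h j = ∅)

/-- `E` contains a linear cycle. -/
def HasLinearCycle {V : Type*} [DecidableEq V] (E : Finset (Finset V)) : Prop :=
  ∃ (k : ℕ) (v : ZMod k → V) (h : ZMod k → Finset V), IsLinearCycle E k v h

/-- The degree of a vertex: the number of hyperedges containing it. -/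
def hDegree {V : Type*} [DecidableEq V] (E : Finset (Finset V)) (v : V) : ℕ :=
  (E.filter (fun e => v ∈ e)).card

/-- The support of a vertex `v` in a hyperedge `h`: the pairs of `h` that form a
hyperedge together with `v`. -/
def hSupport {V : Type*} [DecidableEq V] (E : Finset (Finset V)) (h : Finset V) (v : V) :
    Finset (Finset V) :=
  (h.powersetCard 2).filter (fun p => insert v p ∈ E)

/-- A pair of vertices is thick if at least two hyperedges contain it. -/
def ThickPair {V : Type*} [DecidableEq V] (E : Finset (Finset V)) (a b : V) : Prop :=
  2 ≤ (E.filter (fun e => a ∈ e ∧ b ∈ e)).card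

/-- A hyperedge is thick if each of its pairs is contained in at least two hyperedges. -/
def ThickEdge {V : Type*} [DecidableEq V] (E : Finset (Finset V)) (h : Finset V) : Prop :=
  ∀ p ∈ h.powersetCard 2, 2 ≤ (E.filter (fun e => p ⊆ e)).card

/-- `v ∉ h` is strongly associated to the hyperedge `h` if at least two of the 3-sets
formed by `v` and a pair of `h` are hyperedges. -/
def StronglyAssoc {V : Type*} [DecidableEq V] (E : Finset (Finset V)) (h : Finset V) (v : V) :
    Prop :=
  v ∉ h ∧ 2 ≤ (hSupport E h v).card

/-- A linear path of length `k` (given by its sequence of hyperedges): consecutive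
hyperedges meet in exactly one vertex, non-consecutive ones are disjoint. -/
def IsLinearPath {V : Type*} [DecidableEq V] (E : Finset (Finset V)) (k : ℕ)
    (h : Fin k → Finset V) : Prop :=
  Function.Injective h ∧ (∀ i, h i ∈ E) ∧
    (∀ i j : Fin k, (i : ℕ) + 1 = (j : ℕ) → (h i ∩ h j).card = 1) ∧
    (∀ i j : Fin k, (i : ℕ) + 2 ≤ (j : ℕ) → h i ∩ h j = ∅)

/-- A linear tree with vertex set `S` and edge set `T`: built from a single vertex by
repeatedly adding hyperedges meeting the current vertex set in exactly one vertex. -/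
inductive IsLinearTree {V : Type*} [DecidableEq V] : Finset V → Finset (Finset V) → Prop
  | single (v : V) : IsLinearTree {v} ∅
  | extend {S : Finset V} {T : Finset (Finset V)} (e : Finset V) :
      IsLinearTree S T → e.card = 3 → (e ∩ S).card = 1 → IsLinearTree (S ∪ e) (insert e T)


section MainHelpers
variable {V : Type*} [DecidableEq V]

lemma pair_classify' {a b c : V} (hab : a ≠ b) (hac : a ≠ c) (hbc : b ≠ c)
    {s : Finset V} (hs : s ⊆ {a, b, c}) (h2 : s.card = 2) :
    s = {a, b} ∨ s = {b, c} ∨ s = {c, a} := by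
  obtain ⟨u, v, huv, rfl⟩ := Finset.card_eq_two.mp h2
  have hu := hs (Finset.mem_insert_self u {v})
  have hv := hs (Finset.mem_insert_of_mem (Finset.mem_singleton_self v))
  simp only [Finset.mem_insert, Finset.mem_singleton] at hu hv
  rcases hu with rfl | rfl | rfl <;> rcases hv with rfl | rfl | rfl <;>
    simp_all [Finset.pair_comm]

lemma thick_wit' {E : Finset (Finset V)} (h3 : ∀ e ∈ E, e.card = 3)
    {a b c : V} (hab : a ≠ b)
    (hth : 2 ≤ (E.filter fun e => ({a, b} : Finset V) ⊆ e).card) :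
    ∃ w, w ≠ a ∧ w ≠ b ∧ w ≠ c ∧ ({w, a, b} : Finset V) ∈ E := by
  have hex : ∃ e ∈ E.filter fun e => ({a, b} : Finset V) ⊆ e, e ≠ ({c, a, b} : Finset V) := by
    by_contra hcon
    push_neg at hcon
    have hss : (E.filter fun e => ({a, b} : Finset V) ⊆ e) ⊆ {({c, a, b} : Finset V)} := by
      intro e he; simp [hcon e he]
    have := Finset.card_le_card hss
    simp at this; omega
  obtain ⟨e, he, hne⟩ := hex
  rw [Finset.mem_filter] at he
  obtain ⟨heE, hsub⟩ := he
  have hcard := h3 e heE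
  have : ∃ w ∈ e, w ∉ ({a, b} : Finset V) := by
    by_contra hcon
    push_neg at hcon
    have h1 := Finset.card_le_card (hcon : e ⊆ {a, b})
    have h2 : ({a, b} : Finset V).card ≤ 2 := Finset.card_insert_le _ _ |>.trans (by simp)
    omega
  obtain ⟨w, hwe, hwab⟩ := this
  simp only [Finset.mem_insert, Finset.mem_singleton, not_or] at hwab
  have hsub2 : ({w, a, b} : Finset V) ⊆ e := by
    intro x hx
    simp only [Finset.mem_insert, Finset.mem_singleton] at hx
    rcases hx with rfl | rfl | rfl
    · exact hwe
    · exact hsub (by simp)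
    · exact hsub (by simp)
  have hcard2 : ({w, a, b} : Finset V).card = 3 := by
    rw [Finset.card_insert_of_notMem (by simp [hwab.1, hwab.2]),
      Finset.card_insert_of_notMem (by simp [hab]), Finset.card_singleton]
  have heq : ({w, a, b} : Finset V) = e :=
    Finset.eq_of_subset_of_card_le hsub2 (by omega)
  refine ⟨w, hwab.1, hwab.2, ?_, heq ▸ heE⟩
  rintro rfl
  exact hne heq.symm

end MainHelpers

lemma sdr_aux' {α : Type*} (A B C : α → Prop) (p q r : α)
    (hpq : p ≠ q) (hpr : p ≠ r) (hqr : q ≠ r)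
    (hB : ∃ x, B x) (hC : ∃ x, C x)
    (hp : (A p ∧ B p) ∨ (B p ∧ C p) ∨ (A p ∧ C p))
    (hq : (A q ∧ B q) ∨ (B q ∧ C q) ∨ (A q ∧ C q))
    (hr : A r) :
    ∃ x y z, A x ∧ B y ∧ C z ∧ x ≠ y ∧ y ≠ z ∧ x ≠ z := by
  have hpBC : B p ∨ C p := by tauto
  have hqBC : B q ∨ C q := by tauto
  rcases hpBC with hpB | hpC
  · rcases hqBC with hqB | hqC
    · by_cases hpC : C p
      · exact ⟨r, q, p, hr, hqB, hpC, hqr.symm, hpq.symm, hpr.symm⟩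
      by_cases hqC : C q
      · exact ⟨r, p, q, hr, hpB, hqC, hpr.symm, hpq, hqr.symm⟩
      obtain ⟨z, hz⟩ := hC
      have hzp : z ≠ p := fun h => hpC (h ▸ hz)
      have hzq : z ≠ q := fun h => hqC (h ▸ hz)
      by_cases hzr : z = r
      · have hpA : A p := by tauto
        exact ⟨p, q, z, hpA, hqB, hz, hpq, hzq.symm, hzp.symm⟩
      · exact ⟨r, p, z, hr, hpB, hz, hpr.symm, hzp.symm, fun h => hzr h.symm⟩
    · exact ⟨r, p, q, hr, hpB, hqC, hpr.symm, hpq, hqr.symm⟩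
  · rcases hqBC with hqB | hqC
    · exact ⟨r, q, p, hr, hqB, hpC, hqr.symm, hpq.symm, hpr.symm⟩
    · by_cases hpB : B p
      · exact ⟨r, p, q, hr, hpB, hqC, hpr.symm, hpq, hqr.symm⟩
      by_cases hqB : B q
      · exact ⟨r, q, p, hr, hqB, hpC, hqr.symm, hpq.symm, hpr.symm⟩
      obtain ⟨y, hy⟩ := hB
      have hyp : y ≠ p := fun h => hpB (h ▸ hy)
      have hyq : y ≠ q := fun h => hqB (h ▸ hy)
      by_cases hyr : y = r
      · have hqA : A q := by tauto
        exact ⟨q, r, p, hqA, hyr ▸ hy, hpC, hqr, hyr ▸ hyp, hpq.symm⟩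
      · exact ⟨r, y, p, hr, hy, hpC, fun h => hyr h.symm, hyp, hpr.symm⟩

lemma sdr' {α : Type*} (A B C : α → Prop) (p q r : α)
    (hpq : p ≠ q) (hpr : p ≠ r) (hqr : q ≠ r)
    (hA : ∃ x, A x) (hB : ∃ x, B x) (hC : ∃ x, C x)
    (hp : (A p ∧ B p) ∨ (B p ∧ C p) ∨ (A p ∧ C p))
    (hq : (A q ∧ B q) ∨ (B q ∧ C q) ∨ (A q ∧ C q))
    (hr : A r ∨ B r ∨ C r) :
    ∃ x y z, A x ∧ B y ∧ C z ∧ x ≠ y ∧ y ≠ z ∧ x ≠ z := by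
  rcases hr with hr | hr | hr
  · exact sdr_aux' A B C p q r hpq hpr hqr hB hC hp hq hr
  · obtain ⟨y, z, x, hy, hz, hx, h1, h2, h3⟩ :=
      sdr_aux' B C A p q r hpq hpr hqr hC hA (by tauto) (by tauto) hr
    exact ⟨x, y, z, hx, hy, hz, h3.symm, h1, h2.symm⟩
  · obtain ⟨z, x, y, hz, hx, hy, h1, h2, h3⟩ :=
      sdr_aux' C A B p q r hpq hpr hqr hA hB (by tauto) (by tauto) hr
    exact ⟨x, y, z, hx, hy, hz, h2, h3.symm, h1.symm⟩

def tripleFun {α : Type*} (a b c : α) : ZMod 3 → α :=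
  fun i => if i = 0 then a else if i = 1 then b else c

lemma tripleFun_zero {α : Type*} (a b c : α) : tripleFun a b c 0 = a := if_pos rfl

lemma tripleFun_one {α : Type*} (a b c : α) : tripleFun a b c 1 = b := by
  unfold tripleFun
  rw [if_neg (by decide), if_pos rfl]

lemma tripleFun_two {α : Type*} (a b c : α) : tripleFun a b c 2 = c := by
  unfold tripleFun
  rw [if_neg (by decide), if_neg (by decide)]

section
variable {V : Type*} [DecidableEq V]

lemma cycle_of_three {E : Finset (Finset V)} {a b c x y z : V}
    (hab : a ≠ b) (hac : a ≠ c) (hbc : b ≠ c)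
    (hxa : x ≠ a) (hxb : x ≠ b) (hxc : x ≠ c)
    (hya : y ≠ a) (hyb : y ≠ b) (hyc : y ≠ c)
    (hza : z ≠ a) (hzb : z ≠ b) (hzc : z ≠ c)
    (hxy : x ≠ y) (hyz : y ≠ z) (hxz : x ≠ z)
    (hx : ({x, a, b} : Finset V) ∈ E) (hy : ({y, b, c} : Finset V) ∈ E)
    (hz : ({z, c, a} : Finset V) ∈ E) : HasLinearCycle E := by
  refine ⟨3, tripleFun a b c,
    tripleFun ({x, a, b} : Finset V) ({y, b, c} : Finset V) ({z, c, a} : Finset V), ?_⟩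
  have hcases : ∀ i : ZMod 3, i = 0 ∨ i = 1 ∨ i = 2 := by decide
  have i01 : (0 : ZMod 3) + 1 = 1 := by decide
  have i12 : (1 : ZMod 3) + 1 = 2 := by decide
  have i20 : (2 : ZMod 3) + 1 = 0 := by decide
  have e01 : ({x, a, b} : Finset V) ∩ {y, b, c} = {b} := by
    ext u
    simp only [Finset.mem_inter, Finset.mem_insert, Finset.mem_singleton]
    constructor
    · rintro ⟨rfl | rfl | rfl, h | h | h⟩ <;> tauto
    · rintro rfl; tauto
  have e12 : ({y, b, c} : Finset V) ∩ {z, c, a} = {c} := by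
    ext u
    simp only [Finset.mem_inter, Finset.mem_insert, Finset.mem_singleton]
    constructor
    · rintro ⟨rfl | rfl | rfl, h | h | h⟩ <;> tauto
    · rintro rfl; tauto
  have e20 : ({z, c, a} : Finset V) ∩ {x, a, b} = {a} := by
    ext u
    simp only [Finset.mem_inter, Finset.mem_insert, Finset.mem_singleton]
    constructor
    · rintro ⟨rfl | rfl | rfl, h | h | h⟩ <;> tauto
    · rintro rfl; tauto
  have d01 : ({x, a, b} : Finset V) ≠ {y, b, c} := by
    intro h
    have : a ∈ ({y, b, c} : Finset V) := h ▸ (by simp)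
    simp only [Finset.mem_insert, Finset.mem_singleton] at this
    tauto
  have d12 : ({y, b, c} : Finset V) ≠ {z, c, a} := by
    intro h
    have : b ∈ ({z, c, a} : Finset V) := h ▸ (by simp)
    simp only [Finset.mem_insert, Finset.mem_singleton] at this
    tauto
  have d02 : ({x, a, b} : Finset V) ≠ {z, c, a} := by
    intro h
    have : b ∈ ({z, c, a} : Finset V) := h ▸ (by simp)
    simp only [Finset.mem_insert, Finset.mem_singleton] at this
    tauto
  refine ⟨le_refl 3, ?_, ?_, ?_, ?_, ?_⟩
  · intro i j hij
    rcases hcases i with rfl | rfl | rfl <;> rcases hcases j with rfl | rfl | rfl <;>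
      simp only [tripleFun_zero, tripleFun_one, tripleFun_two] at hij <;>
      first
        | rfl
        | exact absurd hij hab | exact absurd hij hac | exact absurd hij hbc
        | exact absurd hij hab.symm | exact absurd hij hac.symm | exact absurd hij hbc.symm
  · intro i j hij
    rcases hcases i with rfl | rfl | rfl <;> rcases hcases j with rfl | rfl | rfl <;>
      simp only [tripleFun_zero, tripleFun_one, tripleFun_two] at hij <;>
      first
        | rfl
        | exact absurd hij d01 | exact absurd hij d12 | exact absurd hij d02
        | exact absurd hij d01.symm | exact absurd hij d12.symm | exact absurd hij d02.symm
  · intro i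
    rcases hcases i with rfl | rfl | rfl <;>
      simp only [tripleFun_zero, tripleFun_one, tripleFun_two] <;>
      assumption
  · intro i
    rcases hcases i with rfl | rfl | rfl
    · rw [i01, tripleFun_zero, tripleFun_one, tripleFun_one]; exact e01
    · rw [i12, tripleFun_one, tripleFun_two, tripleFun_two]; exact e12
    · rw [i20, tripleFun_two, tripleFun_zero, tripleFun_zero]; exact e20
  · intro i j h1 h2 h3
    exact absurd rfl
      ((by decide : ∀ i j : ZMod 3, i ≠ j → i + 1 ≠ j → j + 1 ≠ i → True ≠ True) i j h1 h2 h3)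

end

set_option maxHeartbeats 1000000 in
theorem two_strong_no_other_assoc {V : Type*} [DecidableEq V] (E : Finset (Finset V))
    (h3 : ∀ e ∈ E, e.card = 3) (hcyc : ¬ HasLinearCycle E) (a b c : V)
    (habc : ({a, b, c} : Finset V) ∈ E) (hthick : ThickEdge E {a, b, c}) (p q : V)
    (hpq : p ≠ q) (hp : StronglyAssoc E {a, b, c} p) (hq : StronglyAssoc E {a, b, c} q) :
    ∀ r : V, r ∉ ({a, b, c, p, q} : Finset V) → hSupport E {a, b, c} r = ∅ := by
  have hcard3 : ({a, b, c} : Finset V).card = 3 := h3 _ habc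
  have hdist : a ≠ b ∧ a ≠ c ∧ b ≠ c := by
    refine ⟨?_, ?_, ?_⟩ <;> rintro rfl
    · rw [Finset.insert_idem] at hcard3
      have := Finset.card_insert_le a {c}
      simp at this; omega
    · rw [Finset.card_insert_of_mem (by simp)] at hcard3
      have := Finset.card_insert_le b {a}
      simp at this; omega
    · rw [Finset.insert_eq_self.mpr (Finset.mem_singleton_self b)] at hcard3
      have := Finset.card_insert_le a {b}
      simp at this; omega
  obtain ⟨hab, hac, hbc⟩ := hdist
  -- support classification
  have hsupp : ∀ v : V, ∀ s ∈ hSupport E {a, b, c} v,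
      insert v s ∈ E ∧ (s = {a, b} ∨ s = {b, c} ∨ s = {c, a}) := by
    intro v s hs
    rw [hSupport, Finset.mem_filter, Finset.mem_powersetCard] at hs
    exact ⟨hs.2, pair_classify' hab hac hbc hs.1.1 hs.1.2⟩
  -- strong association gives two of three edges
  have hstrong : ∀ w : V, StronglyAssoc E {a, b, c} w →
      (({w, a, b} : Finset V) ∈ E ∧ ({w, b, c} : Finset V) ∈ E) ∨
      (({w, b, c} : Finset V) ∈ E ∧ ({w, c, a} : Finset V) ∈ E) ∨
      (({w, a, b} : Finset V) ∈ E ∧ ({w, c, a} : Finset V) ∈ E) := by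
    intro w hw
    obtain ⟨s, hs, t, ht, hst⟩ := Finset.one_lt_card.mp hw.2
    obtain ⟨hsE, hs3⟩ := hsupp w s hs
    obtain ⟨htE, ht3⟩ := hsupp w t ht
    rcases hs3 with rfl | rfl | rfl <;> rcases ht3 with rfl | rfl | rfl <;>
      first
        | exact absurd rfl hst
        | tauto
  have hpabc : p ≠ a ∧ p ≠ b ∧ p ≠ c := by
    have := hp.1; simp only [Finset.mem_insert, Finset.mem_singleton, not_or] at this
    exact this
  have hqabc : q ≠ a ∧ q ≠ b ∧ q ≠ c := by
    have := hq.1; simp only [Finset.mem_insert, Finset.mem_singleton, not_or] at this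
    exact this
  -- nonemptiness from thickness
  have hth_ab := hthick {a, b} (Finset.mem_powersetCard.mpr
    ⟨by intro x hx; simp only [Finset.mem_insert, Finset.mem_singleton] at hx ⊢; tauto,
     Finset.card_pair hab⟩)
  have hth_bc := hthick {b, c} (Finset.mem_powersetCard.mpr
    ⟨by intro x hx; simp only [Finset.mem_insert, Finset.mem_singleton] at hx ⊢; tauto,
     Finset.card_pair hbc⟩)
  have hth_ca := hthick {c, a} (Finset.mem_powersetCard.mpr
    ⟨by intro x hx; simp only [Finset.mem_insert, Finset.mem_singleton] at hx ⊢; tauto,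
     Finset.card_pair hac.symm⟩)
  have hAne : ∃ x : V, (x ≠ a ∧ x ≠ b ∧ x ≠ c) ∧ ({x, a, b} : Finset V) ∈ E := by
    obtain ⟨w, h1, h2, h4, h5⟩ := thick_wit' h3 hab hth_ab
    exact ⟨w, ⟨h1, h2, h4⟩, h5⟩
  have hBne : ∃ x : V, (x ≠ a ∧ x ≠ b ∧ x ≠ c) ∧ ({x, b, c} : Finset V) ∈ E := by
    obtain ⟨w, h1, h2, h4, h5⟩ := thick_wit' h3 hbc hth_bc
    exact ⟨w, ⟨h4, h1, h2⟩, h5⟩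
  have hCne : ∃ x : V, (x ≠ a ∧ x ≠ b ∧ x ≠ c) ∧ ({x, c, a} : Finset V) ∈ E := by
    obtain ⟨w, h1, h2, h4, h5⟩ := thick_wit' h3 hac.symm hth_ca
    exact ⟨w, ⟨h2, h4, h1⟩, h5⟩
  intro r hr
  simp only [Finset.mem_insert, Finset.mem_singleton, not_or] at hr
  obtain ⟨hra, hrb, hrc, hrp, hrq⟩ := hr
  by_contra hcon
  obtain ⟨s, hs⟩ := Finset.nonempty_of_ne_empty hcon
  obtain ⟨hsE, hs3⟩ := hsupp r s hs
  have hrmem :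
      ((r ≠ a ∧ r ≠ b ∧ r ≠ c) ∧ ({r, a, b} : Finset V) ∈ E) ∨
      ((r ≠ a ∧ r ≠ b ∧ r ≠ c) ∧ ({r, b, c} : Finset V) ∈ E) ∨
      ((r ≠ a ∧ r ≠ b ∧ r ≠ c) ∧ ({r, c, a} : Finset V) ∈ E) := by
    rcases hs3 with rfl | rfl | rfl
    · exact Or.inl ⟨⟨hra, hrb, hrc⟩, hsE⟩
    · exact Or.inr (Or.inl ⟨⟨hra, hrb, hrc⟩, hsE⟩)
    · exact Or.inr (Or.inr ⟨⟨hra, hrb, hrc⟩, hsE⟩)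
  have hpSDR :
      (((p ≠ a ∧ p ≠ b ∧ p ≠ c) ∧ ({p, a, b} : Finset V) ∈ E) ∧
        ((p ≠ a ∧ p ≠ b ∧ p ≠ c) ∧ ({p, b, c} : Finset V) ∈ E)) ∨
      (((p ≠ a ∧ p ≠ b ∧ p ≠ c) ∧ ({p, b, c} : Finset V) ∈ E) ∧
        ((p ≠ a ∧ p ≠ b ∧ p ≠ c) ∧ ({p, c, a} : Finset V) ∈ E)) ∨
      (((p ≠ a ∧ p ≠ b ∧ p ≠ c) ∧ ({p, a, b} : Finset V) ∈ E) ∧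
        ((p ≠ a ∧ p ≠ b ∧ p ≠ c) ∧ ({p, c, a} : Finset V) ∈ E)) := by
    rcases hstrong p hp with ⟨h1, h2⟩ | ⟨h1, h2⟩ | ⟨h1, h2⟩
    · exact Or.inl ⟨⟨hpabc, h1⟩, ⟨hpabc, h2⟩⟩
    · exact Or.inr (Or.inl ⟨⟨hpabc, h1⟩, ⟨hpabc, h2⟩⟩)
    · exact Or.inr (Or.inr ⟨⟨hpabc, h1⟩, ⟨hpabc, h2⟩⟩)
  have hqSDR :
      (((q ≠ a ∧ q ≠ b ∧ q ≠ c) ∧ ({q, a, b} : Finset V) ∈ E) ∧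
        ((q ≠ a ∧ q ≠ b ∧ q ≠ c) ∧ ({q, b, c} : Finset V) ∈ E)) ∨
      (((q ≠ a ∧ q ≠ b ∧ q ≠ c) ∧ ({q, b, c} : Finset V) ∈ E) ∧
        ((q ≠ a ∧ q ≠ b ∧ q ≠ c) ∧ ({q, c, a} : Finset V) ∈ E)) ∨
      (((q ≠ a ∧ q ≠ b ∧ q ≠ c) ∧ ({q, a, b} : Finset V) ∈ E) ∧
        ((q ≠ a ∧ q ≠ b ∧ q ≠ c) ∧ ({q, c, a} : Finset V) ∈ E)) := by
    rcases hstrong q hq with ⟨h1, h2⟩ | ⟨h1, h2⟩ | ⟨h1, h2⟩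
    · exact Or.inl ⟨⟨hqabc, h1⟩, ⟨hqabc, h2⟩⟩
    · exact Or.inr (Or.inl ⟨⟨hqabc, h1⟩, ⟨hqabc, h2⟩⟩)
    · exact Or.inr (Or.inr ⟨⟨hqabc, h1⟩, ⟨hqabc, h2⟩⟩)
  obtain ⟨x, y, z, hxA, hyB, hzC, hxy, hyz, hxz⟩ :=
    sdr' (fun w => (w ≠ a ∧ w ≠ b ∧ w ≠ c) ∧ ({w, a, b} : Finset V) ∈ E)
      (fun w => (w ≠ a ∧ w ≠ b ∧ w ≠ c) ∧ ({w, b, c} : Finset V) ∈ E)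
      (fun w => (w ≠ a ∧ w ≠ b ∧ w ≠ c) ∧ ({w, c, a} : Finset V) ∈ E)
      p q r hpq (fun h => hrp h.symm) (fun h => hrq h.symm) hAne hBne hCne hpSDR hqSDR hrmem
  obtain ⟨⟨hxa, hxb, hxc⟩, hxE⟩ := hxA
  obtain ⟨⟨hya, hyb, hyc⟩, hyE⟩ := hyB
  obtain ⟨⟨hza, hzb, hzc⟩, hzE⟩ := hzC
  exact hcyc (cycle_of_three hab hac hbc hxa hxb hxc hya hyb hyc hza hzb hzc
    hxy hyz hxz hxE hyE hzE)
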